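/- Let S be a finite set of consecutive integers with |S| = N ≥ 1, let m be a positive integer and a an integer. Then the number of quadruples (t,u,v,w) ∈ S⁴ with t+u = v+w and v-t ≡ a (mod m) equals ∑_{n ∈ ℤ} max(0, N - |a + n·m|)². -/

import Mathlib

open Finset

private lemma cardA (a₀ : ℤ) (N : ℕ) (d : ℤ) :
    ((Finset.Icc a₀ (a₀ + N - 1)).filter
      (fun t => t + d ∈ Finset.Icc a₀ (a₀ + N - 1))).card = ((N : ℤ) - |d|).toNat := by
  have h : (Finset.Icc a₀ (a₀ + N - 1)).filter
      (fun t => t + d ∈ Finset.Icc a₀ (a₀ + N - 1))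
      = Finset.Icc (max a₀ (a₀ - d)) (min (a₀ + N - 1) (a₀ + N - 1 - d)) := by
    ext t
    simp only [Finset.mem_filter, Finset.mem_Icc, le_min_iff, max_le_iff]
    omega
  rw [h, Int.card_Icc]
  rcases abs_cases d with ⟨h1, h2⟩ | ⟨h1, h2⟩ <;> rw [h1] <;>
    rcases le_total a₀ (a₀ - d) with h3 | h3 <;>
    simp [max_eq_left, max_eq_right, min_eq_left, min_eq_right, h3] <;> omega

/-- Let `S` be a finite set of `N ≥ 1` consecutive integers, `m` a positive integer,
`a` an integer.  Then the number of quadruples `(t,u,v,w) ∈ S⁴` with `t+u = v+w` and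
`v - t ≡ a (mod m)` equals `∑_{n ∈ ℤ} max(0, N - |a + n·m|)²`. -/
theorem stmt_2 (a₀ : ℤ) (N : ℕ) (hN : 1 ≤ N) (m : ℕ) (hm : 0 < m) (a : ℤ) :
    let S : Finset ℤ := Finset.Icc a₀ (a₀ + N - 1)
    (((S ×ˢ S ×ˢ S ×ˢ S).filter
        (fun q : ℤ × ℤ × ℤ × ℤ => q.1 + q.2.1 = q.2.2.1 + q.2.2.2 ∧
          q.2.2.1 - q.1 ≡ a [ZMOD (m : ℤ)])).card : ℝ)
      = ∑' n : ℤ, (max 0 ((N : ℝ) - |(a : ℝ) + (n : ℝ) * (m : ℝ)|)) ^ 2 := by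
  intro S
  have hS : S = Finset.Icc a₀ (a₀ + N - 1) := rfl
  set F := (S ×ˢ S ×ˢ S ×ˢ S).filter
      (fun q : ℤ × ℤ × ℤ × ℤ => q.1 + q.2.1 = q.2.2.1 + q.2.2.2 ∧
        q.2.2.1 - q.1 ≡ a [ZMOD (m : ℤ)]) with hF
  set D : Finset ℤ := Finset.Icc (1 - (N : ℤ)) ((N : ℤ) - 1) with hD
  -- fiberwise decomposition
  have hmem : ∀ q ∈ F, q.2.2.1 - q.1 ∈ D := by
    rintro ⟨t, u, v, w⟩ hq
    simp only [hF, hS, Finset.mem_filter, Finset.mem_product, Finset.mem_Icc] at hq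
    simp only [hD, Finset.mem_Icc]
    omega
  have hcard : F.card = ∑ d ∈ D, (F.filter (fun q => q.2.2.1 - q.1 = d)).card :=
    Finset.card_eq_sum_card_fiberwise hmem
  -- each fiber
  have hfiber : ∀ d : ℤ, d ≡ a [ZMOD (m : ℤ)] →
      (F.filter (fun q => q.2.2.1 - q.1 = d)).card = (((N : ℤ) - |d|).toNat) ^ 2 := by
    intro d hd
    have himg : F.filter (fun q => q.2.2.1 - q.1 = d)
        = ((S.filter (fun t => t + d ∈ S)) ×ˢ (S.filter (fun t => t + d ∈ S))).image
            (fun p : ℤ × ℤ => (p.1, p.2 + d, p.1 + d, p.2)) := by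
      ext ⟨t, u, v, w⟩
      simp only [hF, hS, Finset.mem_filter, Finset.mem_product, Finset.mem_image,
        Finset.mem_Icc, Prod.mk.injEq, Prod.exists]
      constructor
      · rintro ⟨⟨⟨ht, hu, hv, hw⟩, heq, _⟩, hdd⟩
        exact ⟨t, w, ⟨⟨ht, by omega⟩, ⟨hw, by omega⟩⟩, rfl, by omega, by omega, rfl⟩
      · rintro ⟨t', w', ⟨⟨ht', ht'd⟩, hw', hw'd⟩, h1, h2, h3, h4⟩
        have hvt : v - t = d := by omega
        refine ⟨⟨⟨by omega, by omega, by omega, by omega⟩, by omega, ?_⟩, hvt⟩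
        rw [hvt]; exact hd
    have hinj : Function.Injective (fun p : ℤ × ℤ => (p.1, p.2 + d, p.1 + d, p.2)) := by
      intro p q h
      simp only [Prod.mk.injEq] at h
      exact Prod.ext h.1 h.2.2.2
    rw [himg, Finset.card_image_of_injective _ hinj, Finset.card_product]
    have := cardA a₀ N d
    rw [hS, this]; ring
  have hfiber0 : ∀ d : ℤ, ¬ d ≡ a [ZMOD (m : ℤ)] →
      (F.filter (fun q => q.2.2.1 - q.1 = d)).card = 0 := by
    intro d hd
    rw [Finset.card_eq_zero, Finset.filter_eq_empty_iff]
    rintro ⟨t, u, v, w⟩ hq hdd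
    simp only [hF, Finset.mem_filter] at hq
    exact hd (hdd ▸ hq.2.2)
  -- restrict to congruent d
  set P : Finset ℤ := D.filter (fun d => d ≡ a [ZMOD (m : ℤ)]) with hP
  have hsum : F.card = ∑ d ∈ P, (((N : ℤ) - |d|).toNat) ^ 2 := by
    have h1 : ∑ d ∈ D, (F.filter (fun q => q.2.2.1 - q.1 = d)).card
        = ∑ d ∈ P, (F.filter (fun q => q.2.2.1 - q.1 = d)).card := by
      refine (Finset.sum_subset (Finset.filter_subset _ D) ?_).symm
      intro d hd hdp
      exact hfiber0 d (fun h => hdp (Finset.mem_filter.mpr ⟨hd, h⟩))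
    rw [hcard, h1]
    exact Finset.sum_congr rfl (fun d hd => hfiber d (Finset.mem_filter.mp hd).2)
  -- index set for the tsum
  set E : Finset ℤ := P.image (fun d => (d - a) / (m : ℤ)) with hE
  set f : ℤ → ℝ := fun n => (max 0 ((N : ℝ) - |(a : ℝ) + (n : ℝ) * (m : ℝ)|)) ^ 2 with hf
  have hmZ : (m : ℤ) ≠ 0 := by positivity
  have hzero : ∀ n : ℤ, n ∉ E → f n = 0 := by
    intro n hn
    by_contra hfn
    apply hn
    have hx : (0 : ℝ) < (N : ℝ) - |(a : ℝ) + (n : ℝ) * (m : ℝ)| := by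
      by_contra hx
      push_neg at hx
      apply hfn
      simp only [hf]
      rw [max_eq_left hx]
      norm_num
    have hx' : |a + n * (m : ℤ)| < (N : ℤ) := by
      have h : ((|a + n * (m : ℤ)| : ℤ) : ℝ) < (((N : ℤ)) : ℝ) := by
        push_cast
        linarith
      exact_mod_cast h
    refine Finset.mem_image.mpr ⟨a + n * (m : ℤ), ?_, ?_⟩
    · refine Finset.mem_filter.mpr ⟨?_, ?_⟩
      · simp only [hD, Finset.mem_Icc]
        rcases abs_cases (a + n * (m : ℤ)) with ⟨h1, _⟩ | ⟨h1, _⟩ <;> omega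
      · show (a + n * (m : ℤ)) % (m : ℤ) = a % (m : ℤ)
        exact Int.add_mul_emod_self_right _ _ _
    · rw [add_sub_cancel_left, Int.mul_ediv_cancel n hmZ]
  have htsum : ∑' n : ℤ, f n = ∑ n ∈ E, f n := tsum_eq_sum hzero
  have hEsum : ∑ n ∈ E, f n = ∑ d ∈ P, f ((d - a) / (m : ℤ)) := by
    rw [hE]
    refine Finset.sum_image ?_
    intro d₁ h₁ d₂ h₂ hdd
    have hd₁ : (m : ℤ) ∣ d₁ - a := by
      have := (Finset.mem_filter.mp h₁).2
      exact (Int.modEq_iff_dvd.mp this.symm)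
    have hd₂ : (m : ℤ) ∣ d₂ - a := by
      have := (Finset.mem_filter.mp h₂).2
      exact (Int.modEq_iff_dvd.mp this.symm)
    have e₁ := Int.ediv_mul_cancel hd₁
    have e₂ := Int.ediv_mul_cancel hd₂
    have : (d₁ - a) / (m : ℤ) * m = (d₂ - a) / (m : ℤ) * m := by simp only at hdd; rw [hdd]
    omega
  have hterm : ∀ d ∈ P, f ((d - a) / (m : ℤ)) = ((((N : ℤ) - |d|).toNat : ℝ)) ^ 2 := by
    intro d hd
    have hdvd : (m : ℤ) ∣ d - a := Int.modEq_iff_dvd.mp (Finset.mem_filter.mp hd).2.symm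
    have hda : a + ((d - a) / (m : ℤ)) * m = d := by
      have := Int.ediv_mul_cancel hdvd
      omega
    simp only [hf]
    have h1 : (a : ℝ) + (((d - a) / (m : ℤ) : ℤ) : ℝ) * (m : ℝ) = (d : ℝ) := by
      exact_mod_cast congrArg (fun z : ℤ => (z : ℝ)) hda
    rw [h1]
    have habs : ((|d| : ℤ) : ℝ) = |(d : ℝ)| := by push_cast; ring
    have h2 : ((((N : ℤ) - |d|).toNat : ℝ)) = 0 ⊔ ((N : ℝ) - |(d : ℝ)|) := by
      rcases le_total ((N : ℤ)) |d| with h | h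
      · have hr : (N : ℝ) - |(d : ℝ)| ≤ 0 := by
          rw [← habs]
          have h' : ((N : ℤ) : ℝ) ≤ ((|d| : ℤ) : ℝ) := by exact_mod_cast h
          push_cast at h' ⊢
          linarith
        rw [max_eq_left hr, Int.toNat_of_nonpos (by omega)]
        norm_num
      · have hr : (0 : ℝ) ≤ (N : ℝ) - |(d : ℝ)| := by
          rw [← habs]
          have h' : ((|d| : ℤ) : ℝ) ≤ ((N : ℤ) : ℝ) := by exact_mod_cast h
          push_cast at h' ⊢
          linarith
        rw [max_eq_right hr]
        have h3 : (((N : ℤ) - |d|).toNat : ℤ) = (N : ℤ) - |d| := Int.toNat_of_nonneg (by omega)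
        have h4 := congrArg (fun z : ℤ => (z : ℝ)) h3
        push_cast at h4 ⊢
        linarith
    rw [h2]
  calc (F.card : ℝ) = ∑ d ∈ P, ((((N : ℤ) - |d|).toNat : ℝ)) ^ 2 := by
        rw [hsum]; push_cast; rfl
    _ = ∑ d ∈ P, f ((d - a) / (m : ℤ)) := (Finset.sum_congr rfl hterm).symm
    _ = ∑ n ∈ E, f n := hEsum.symm
    _ = ∑' n : ℤ, f n := htsum.symm
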